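/- Two ordered rooted binary trees with n internal nodes are equal if and only if they have the same multiset of induced leaf partitions from internal edges, i.e., e = n - 1 common edge pairs. -/

import Mathlib

inductive BT : Type
  | leaf : BT
  | node : BT → BT → BT
deriving DecidableEq

namespace BT

/-- number of internal nodes -/
def size : BT → ℕ
  | leaf => 0
  | node l r => size l + size r + 1

/-- number of leaves -/
def nl (t : BT) : ℕ := size t + 1

/-- one (right) rotation somewhere in the tree -/
inductive Rot : BT → BT → Prop
  | root (a b c : BT) : Rot (node (node a b) c) (node a (node b c))
  | congrL {l l' : BT} (r : BT) : Rot l l' → Rot (node l r) (node l' r)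
  | congrR (l : BT) {r r' : BT} : Rot r r' → Rot (node l r) (node l r')

/-- a rotation move: a right rotation or its inverse (a left rotation) -/
def Move (s t : BT) : Prop := Rot s t ∨ Rot t s

/-- `Chain n s t`: `s` is transformed into `t` by `n` rotation moves -/
inductive Chain : ℕ → BT → BT → Prop
  | refl (t : BT) : Chain 0 t t
  | step {n : ℕ} {s u t : BT} : Move s u → Chain n u t → Chain (n + 1) s t

/-- rotation distance -/
noncomputable def dR (s t : BT) : ℕ := sInf {n | Chain n s t}

def isNode : BT → Bool
  | leaf => false
  | node _ _ => true

/-- the multiset of leaf partitions induced by internal edges, where the leaves of the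
tree are numbered from `k` on, left to right; each internal edge is recorded by the
set of leaf numbers below it. -/
def iparts : BT → ℕ → Multiset (Finset ℕ)
  | leaf, _ => 0
  | node l r, k =>
      ((if isNode l then {Finset.Ico k (k + nl l)} else 0) + iparts l k)
        + ((if isNode r then {Finset.Ico (k + nl l) (k + nl l + nl r)} else 0)
            + iparts r (k + nl l))

/-- number of common edge pairs -/
def commonEdges (s t : BT) : ℕ := ((iparts s 0) ∩ (iparts t 0)).card

lemma size_eq_zero {t : BT} : t.size = 0 ↔ t = leaf := by
  cases t <;> simp [size]

lemma isNode_iff {t : BT} : isNode t = true ↔ 0 < t.size := by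
  cases t <;> simp [size, isNode]

lemma isNode_of_size {s t : BT} (h : s.size = t.size) : isNode s = isNode t := by
  cases s <;> cases t <;> simp_all [size, isNode]

lemma nl_pos (t : BT) : 0 < nl t := Nat.succ_pos _

lemma Ico_inj {a b c d : ℕ} (hab : a < b) (h : Finset.Ico a b = Finset.Ico c d) :
    a = c ∧ b = d := by
  have ha : a ∈ Finset.Ico c d := h ▸ Finset.mem_Ico.mpr ⟨le_refl a, hab⟩
  rw [Finset.mem_Ico] at ha
  have hc : c ∈ Finset.Ico a b := by
    rw [h]; exact Finset.mem_Ico.mpr ⟨le_refl c, lt_of_le_of_lt ha.1 ha.2⟩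
  rw [Finset.mem_Ico] at hc
  have hac : a = c := le_antisymm hc.1 ha.1
  have hcard : (Finset.Ico a b).card = (Finset.Ico c d).card := by rw [h]
  rw [Nat.card_Ico, Nat.card_Ico] at hcard
  omega

lemma mem_iparts : ∀ (t : BT) (k : ℕ) (A : Finset ℕ), A ∈ iparts t k →
    ∃ a b, k ≤ a ∧ a < b ∧ b ≤ k + nl t ∧ A = Finset.Ico a b := by
  intro t
  induction t with
  | leaf => intro k A hA; simp [iparts] at hA
  | node l r ihl ihr =>
    intro k A hA
    have hnl : nl (node l r) = nl l + nl r := by simp [nl, size]; omega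
    simp only [iparts, Multiset.mem_add] at hA
    rcases hA with (h | h) | (h | h)
    · split at h
      · rw [Multiset.mem_singleton] at h
        exact ⟨k, k + nl l, le_refl k, by have := nl_pos l; omega,
          by have := nl_pos r; omega, h⟩
      · simp at h
    · obtain ⟨a, b, h1, h2, h3, h4⟩ := ihl k A h
      exact ⟨a, b, h1, h2, by have := nl_pos r; omega, h4⟩
    · split at h
      · rw [Multiset.mem_singleton] at h
        exact ⟨k + nl l, k + nl l + nl r, by omega, by have := nl_pos r; omega,
          by omega, h⟩
      · simp at h
    · obtain ⟨a, b, h1, h2, h3, h4⟩ := ihr (k + nl l) A h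
      exact ⟨a, b, by omega, h2, by omega, h4⟩

lemma startk {l r : BT} {k b : ℕ} (hb : k < b)
    (h : Finset.Ico k b ∈ iparts (node l r) k) : isNode l = true ∧ b ≤ k + nl l := by
  simp only [iparts, Multiset.mem_add] at h
  rcases h with (h | h) | (h | h)
  · split at h
    · rw [Multiset.mem_singleton] at h
      obtain ⟨_, h2⟩ := Ico_inj hb h
      exact ⟨by assumption, by omega⟩
    · simp at h
  · obtain ⟨a, b', h1, h2, h3, h4⟩ := mem_iparts l k _ h
    obtain ⟨ha, hb'⟩ := Ico_inj hb h4
    have : isNode l = true := by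
      cases l with
      | leaf => simp [iparts] at h
      | node _ _ => rfl
    exact ⟨this, by omega⟩
  · split at h
    · rw [Multiset.mem_singleton] at h
      obtain ⟨ha, _⟩ := Ico_inj hb h
      have := nl_pos l
      omega
    · simp at h
  · obtain ⟨a, b', h1, h2, h3, h4⟩ := mem_iparts r (k + nl l) _ h
    obtain ⟨ha, hb'⟩ := Ico_inj hb h4
    have := nl_pos l
    omega

lemma nl_le {l r l' r' : BT} {k : ℕ}
    (hip : iparts (node l r) k = iparts (node l' r') k) : nl l ≤ nl l' := by
  cases hl : isNode l with
  | false =>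
    have : l = leaf := by cases l <;> simp_all [isNode]
    subst this
    have := nl_pos l'
    simp [nl, size]
  | true =>
    have hmem : Finset.Ico k (k + nl l) ∈ iparts (node l r) k := by
      simp only [iparts, Multiset.mem_add, hl, if_true]
      exact Or.inl (Or.inl (Multiset.mem_singleton.mpr rfl))
    rw [hip] at hmem
    have := startk (by have := nl_pos l; omega) hmem
    omega

lemma filter_iparts (l r : BT) (k : ℕ) :
    Multiset.filter (· ⊆ Finset.Ico k (k + nl l)) (iparts (node l r) k)
      = (if isNode l then {Finset.Ico k (k + nl l)} else 0) + iparts l k ∧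
    Multiset.filter (¬ · ⊆ Finset.Ico k (k + nl l)) (iparts (node l r) k)
      = (if isNode r then {Finset.Ico (k + nl l) (k + nl l + nl r)} else 0)
          + iparts r (k + nl l) := by
  set L := (if isNode l then ({Finset.Ico k (k + nl l)} : Multiset (Finset ℕ)) else 0)
      + iparts l k with hL
  set R := (if isNode r then ({Finset.Ico (k + nl l) (k + nl l + nl r)} : Multiset (Finset ℕ)) else 0)
      + iparts r (k + nl l) with hR
  have hiparts : iparts (node l r) k = L + R := rfl
  have hLmem : ∀ A ∈ L, A ⊆ Finset.Ico k (k + nl l) := by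
    intro A hA
    rw [hL, Multiset.mem_add] at hA
    rcases hA with h | h
    · split at h
      · rw [Multiset.mem_singleton] at h; subst h; exact subset_rfl
      · simp at h
    · obtain ⟨a, b, h1, h2, h3, h4⟩ := mem_iparts l k _ h
      subst h4
      exact Finset.Ico_subset_Ico h1 h3
  have hRmem : ∀ A ∈ R, ¬ A ⊆ Finset.Ico k (k + nl l) := by
    intro A hA
    rw [hR, Multiset.mem_add] at hA
    have key : ∃ a b, k + nl l ≤ a ∧ a < b ∧ A = Finset.Ico a b := by
      rcases hA with h | h
      · split at h
        · rw [Multiset.mem_singleton] at h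
          exact ⟨k + nl l, k + nl l + nl r, le_refl _, by have := nl_pos r; omega, h⟩
        · simp at h
      · obtain ⟨a, b, h1, h2, h3, h4⟩ := mem_iparts r (k + nl l) _ h
        exact ⟨a, b, h1, h2, h4⟩
    obtain ⟨a, b, h1, h2, h3⟩ := key
    subst h3
    intro hsub
    have := hsub (Finset.mem_Ico.mpr ⟨le_refl a, h2⟩)
    rw [Finset.mem_Ico] at this
    omega
  constructor
  · rw [hiparts, Multiset.filter_add, Multiset.filter_eq_self.mpr hLmem,
      Multiset.filter_eq_nil.mpr (by intro A hA h; exact hRmem A hA h), add_zero]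
  · rw [hiparts, Multiset.filter_add,
      Multiset.filter_eq_nil.mpr (by intro A hA h; exact h (hLmem A hA)),
      Multiset.filter_eq_self.mpr (by intro A hA; exact hRmem A hA), zero_add]

lemma iparts_inj : ∀ (S T : BT) (k : ℕ), S.size = T.size →
    iparts S k = iparts T k → S = T := by
  intro S
  induction S with
  | leaf =>
    intro T k h _
    exact (size_eq_zero.mp (by rw [← h]; rfl)).symm
  | node l r ihl ihr =>
    intro T k hsz hip
    cases T with
    | leaf => simp [size] at hsz
    | node l' r' =>
      have hnll : nl l = nl l' := le_antisymm (nl_le hip) (nl_le hip.symm)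
      have hszl : l.size = l'.size := by
        have : nl l = nl l' := hnll
        simp [nl] at this; omega
      have hszr : r.size = r'.size := by
        simp [size] at hsz; omega
      have hfl := filter_iparts l r k
      have hfl' := filter_iparts l' r' k
      rw [← hip, ← hnll] at hfl'
      have heqL := hfl.1.symm.trans hfl'.1
      have heqR := hfl.2.symm.trans hfl'.2
      rw [isNode_of_size hszl, hnll] at heqL
      have hnlr : nl r = nl r' := by simp [nl]; omega
      rw [isNode_of_size hszr, hnll, hnlr] at heqR
      have hl := ihl l' k hszl (add_left_cancel heqL)
      have hr := ihr r' (k + nl l) hszr (by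
        have h5 := add_left_cancel heqR
        rw [hnll]; exact h5)
      rw [hl, hr]

lemma card_iparts : ∀ (t : BT) (k : ℕ), (iparts t k).card = t.size - 1 := by
  intro t
  induction t with
  | leaf => intro k; simp [iparts, size]
  | node l r ihl ihr =>
    intro k
    simp only [iparts, Multiset.card_add, ihl, ihr]
    have h1 : ∀ (c : Bool) (x : Finset ℕ),
        (if c = true then ({x} : Multiset (Finset ℕ)) else 0).card
          = if c = true then 1 else 0 := by
      intro c x; cases c <;> simp
    rw [h1, h1]
    have hl2 : (if isNode l = true then 1 else 0) + (l.size - 1) = l.size := by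
      cases l <;> simp [isNode, size] <;> omega
    have hr2 : (if isNode r = true then 1 else 0) + (r.size - 1) = r.size := by
      cases r <;> simp [isNode, size] <;> omega
    simp only [size]
    omega

theorem eq_iff_same_partitions (n : ℕ) (S T : BT)
    (hS : S.size = n) (hT : T.size = n) :
    (S = T ↔ iparts S 0 = iparts T 0) ∧ (S = T ↔ commonEdges S T = n - 1) := by
  have hiff : S = T ↔ iparts S 0 = iparts T 0 := by
    constructor
    · rintro rfl; rfl
    · intro h; exact iparts_inj S T 0 (hS.trans hT.symm) h
  refine ⟨hiff, ?_⟩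
  constructor
  · rintro rfl
    unfold commonEdges
    have hinter : iparts S 0 ∩ iparts S 0 = iparts S 0 :=
      le_antisymm (Multiset.inter_le_left) (Multiset.le_inter le_rfl le_rfl)
    rw [hinter, card_iparts, hS]
  · intro h
    unfold commonEdges at h
    have hS' := card_iparts S 0
    have hT' := card_iparts T 0
    have h1 : iparts S 0 ∩ iparts T 0 = iparts S 0 :=
      Multiset.eq_of_le_of_card_le (Multiset.inter_le_left) (by omega)
    have h2 : iparts S 0 ∩ iparts T 0 = iparts T 0 :=
      Multiset.eq_of_le_of_card_le (Multiset.inter_le_right) (by omega)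
    exact hiff.mpr (h1.symm.trans h2)

end BT
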